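/- For every λ ≥ 0, the max-QFI and min-QFI of the Poisson distribution P_λ coincide with 4λ: F_max(P_λ) = 4λ = F_min(P_λ). Equivalently, {μ ≥ 0 | P_μ ≻_a P_λ} = [λ,∞) and {μ ≥ 0 | P_λ ≻_a P_μ} = [0,λ]. -/

import Mathlib

/-- Convolution of two sequences on `ℤ`: `(a*b)(n) = ∑_{k∈ℤ} a(k)·b(n−k)`.
For supported-below sequences this `tsum` has finitely many nonzero terms. -/
noncomputable def conv (a b : ℤ → ℝ) : ℤ → ℝ := fun n => ∑' k : ℤ, a k * b (n - k)

/-- A sequence is supported below if it vanishes for all sufficiently negative indices. -/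
def SuppBelow (a : ℤ → ℝ) : Prop := ∃ N : ℤ, ∀ n : ℤ, n < N → a n = 0

/-- A probability distribution on `ℤ`: nonnegative with total sum 1. -/
def IsProbDist (p : ℤ → ℝ) : Prop := (∀ n : ℤ, 0 ≤ p n) ∧ HasSum p 1

/-- `qt` is the reciprocal sequence `q̃` of `q`, relative to `nstar = n_*(q)`,
the least index where `q` is positive: `q̃` vanishes below `−n_*(q)` and
`(q̃*q)(n) = δ_{n,0}` for all `n`. -/
def IsRecip (q qt : ℤ → ℝ) (nstar : ℤ) : Prop :=
  IsLeast {n : ℤ | 0 < q n} nstar ∧ (∀ n : ℤ, n < -nstar → qt n = 0) ∧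
  (∀ n : ℤ, conv qt q n = if n = 0 then (1 : ℝ) else 0)

/-- The generalized Poisson sequence `P_λ : ℤ → ℝ`,
`P_λ(n) = e^{−λ}·λ^n/n!` for `n ≥ 0` and `P_λ(n) = 0` for `n < 0`. -/
noncomputable def poisson (lam : ℝ) : ℤ → ℝ :=
  fun n => if 0 ≤ n then Real.exp (-lam) * lam ^ n.toNat / (Nat.factorial n.toNat : ℝ) else 0

/-- The max-QFI `F_max(p) = inf{4λ | λ ≥ 0, P_λ ≻_a p} ∈ [0,∞]` (with
`inf ∅ = ∞`).  Since `P_λ ≻_a p` means `(P_λ * p̃)(n) ≥ 0` for all `n`, it is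
expressed through the reciprocal sequence `pt = p̃` of `p`. -/
noncomputable def Fmax (pt : ℤ → ℝ) : ENNReal :=
  sInf {x : ENNReal | ∃ lam : ℝ, 0 ≤ lam ∧
    (∀ n : ℤ, 0 ≤ conv (poisson lam) pt n) ∧ x = ENNReal.ofReal (4 * lam)}

/-- The min-QFI `F_min(p) = sup{4λ | λ ≥ 0, p ≻_a P_λ} ∈ [0,∞]`.  Since
`P̃_λ = P_{−λ}`, the condition `p ≻_a P_λ` reads `(p * P_{−λ})(n) ≥ 0`. -/
noncomputable def Fmin (p : ℤ → ℝ) : ENNReal :=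
  sSup {x : ENNReal | ∃ lam : ℝ, 0 ≤ lam ∧
    (∀ n : ℤ, 0 ≤ conv p (poisson (-lam)) n) ∧ x = ENNReal.ofReal (4 * lam)}

lemma binom_aux (a b : ℝ) (m : ℕ) :
    ∑ k ∈ Finset.range (m+1), a^k / (Nat.factorial k : ℝ) * (b^(m-k) / (Nat.factorial (m-k) : ℝ))
      = (a+b)^m / (Nat.factorial m : ℝ) := by
  rw [add_pow, Finset.sum_div]
  refine Finset.sum_congr rfl fun k hk => ?_
  have hk' : k ≤ m := Nat.lt_succ_iff.mp (Finset.mem_range.mp hk)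
  have h := Nat.choose_mul_factorial_mul_factorial hk'
  have hcast : (m.choose k : ℝ) * (Nat.factorial k : ℝ) * (Nat.factorial (m-k) : ℝ)
      = (Nat.factorial m : ℝ) := by exact_mod_cast congrArg Nat.cast h
  have h1 : (Nat.factorial k : ℝ) ≠ 0 := Nat.cast_ne_zero.mpr (Nat.factorial_ne_zero k)
  have h2 : (Nat.factorial (m-k) : ℝ) ≠ 0 := Nat.cast_ne_zero.mpr (Nat.factorial_ne_zero _)
  have h3 : (Nat.factorial m : ℝ) ≠ 0 := Nat.cast_ne_zero.mpr (Nat.factorial_ne_zero m)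
  rw [div_mul_div_comm, div_eq_div_iff (by positivity) h3]
  linear_combination (-(a^k * b^(m-k))) * hcast

lemma conv_poisson (a b : ℝ) (n : ℤ) :
    conv (poisson a) (poisson b) n = poisson (a+b) n := by
  unfold conv
  have hzero : ∀ k : ℤ, k ∉ Finset.Icc 0 n → poisson a k * poisson b (n-k) = 0 := by
    intro k hk
    simp only [Finset.mem_Icc, not_and_or, not_le] at hk
    rcases hk with h | h
    · have : poisson a k = 0 := by simp [poisson, not_le.mpr h]
      simp [this]
    · have : poisson b (n-k) = 0 := by
        have : ¬ (0 ≤ n - k) := by omega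
        simp [poisson, this, not_le.mpr h]
      simp [this]
  rw [tsum_eq_sum hzero]
  by_cases hn : 0 ≤ n
  · obtain ⟨m, rfl⟩ := Int.eq_ofNat_of_zero_le hn
    have hsum : ∑ k ∈ Finset.Icc (0:ℤ) (m:ℤ), poisson a k * poisson b ((m:ℤ)-k)
        = ∑ k ∈ Finset.range (m+1),
            (Real.exp (-a) * a^k / (Nat.factorial k : ℝ)) *
            (Real.exp (-b) * b^(m-k) / (Nat.factorial (m-k) : ℝ)) := by
      refine Finset.sum_nbij' (fun k => k.toNat) (fun k => (k : ℤ)) ?_ ?_ ?_ ?_ ?_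
      · intro k hk
        simp only [Finset.mem_Icc] at hk
        simp only [Finset.mem_range]
        omega
      · intro k hk
        simp only [Finset.mem_range] at hk
        simp only [Finset.mem_Icc]
        omega
      · intro k hk; simp only [Finset.mem_Icc] at hk; simp; omega
      · intro k hk; simp
      · intro k hk
        simp only [Finset.mem_Icc] at hk
        have h1 : (0:ℤ) ≤ k := hk.1
        have h2 : (0:ℤ) ≤ (m:ℤ) - k := by omega
        have h3 : ((m:ℤ) - k).toNat = m - k.toNat := by omega
        simp [poisson, h1, h2, h3, hk.2]
    rw [hsum]
    have : poisson (a+b) (m:ℤ) = Real.exp (-(a+b)) * (a+b)^m / (Nat.factorial m : ℝ) := by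
      simp [poisson]
    rw [this,
      show Real.exp (-(a+b)) * (a+b)^m / (Nat.factorial m : ℝ)
          = Real.exp (-a) * Real.exp (-b) * ((a+b)^m / (Nat.factorial m : ℝ)) by
        rw [neg_add, Real.exp_add]; ring,
      ← binom_aux a b m, Finset.mul_sum]
    refine Finset.sum_congr rfl fun k hk => ?_
    ring
  · rw [Finset.Icc_eq_empty (by omega), Finset.sum_empty]
    simp [poisson, hn]

lemma poisson_nonneg {c : ℝ} (hc : 0 ≤ c) (n : ℤ) : 0 ≤ poisson c n := by
  unfold poisson; split <;> positivity

lemma poisson_nonneg_iff {c : ℝ} (h : ∀ n : ℤ, 0 ≤ poisson c n) : 0 ≤ c := by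
  have h1 := h 1
  have : poisson c 1 = Real.exp (-c) * c := by
    simp [poisson]
  rw [this] at h1
  nlinarith [Real.exp_pos (-c)]

/-- for every `λ ≥ 0`, `F_max(P_λ) = 4λ = F_min(P_λ)` (recall
`P̃_λ = P_{−λ}`, so `F_max(P_λ) = Fmax (poisson (-λ))`); equivalently,
`{μ ≥ 0 | P_μ ≻_a P_λ} = [λ,∞)` and `{μ ≥ 0 | P_λ ≻_a P_μ} = [0,λ]`. -/
theorem qfi_poisson (lam : ℝ) (hlam : 0 ≤ lam) :
    Fmax (poisson (-lam)) = ENNReal.ofReal (4 * lam) ∧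
    Fmin (poisson lam) = ENNReal.ofReal (4 * lam) ∧
    {mu : ℝ | 0 ≤ mu ∧ ∀ n : ℤ, 0 ≤ conv (poisson mu) (poisson (-lam)) n}
      = Set.Ici lam ∧
    {mu : ℝ | 0 ≤ mu ∧ ∀ n : ℤ, 0 ≤ conv (poisson lam) (poisson (-mu)) n}
      = Set.Icc 0 lam := by
  
  have key : ∀ a b : ℝ, (∀ n : ℤ, 0 ≤ conv (poisson a) (poisson b) n) ↔ 0 ≤ a + b := by
    intro a b
    constructor
    · intro h
      exact poisson_nonneg_iff (fun n => by rw [← conv_poisson]; exact h n)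
    · intro h n
      rw [conv_poisson]; exact poisson_nonneg h n
  have hset3 : {mu : ℝ | 0 ≤ mu ∧ ∀ n : ℤ, 0 ≤ conv (poisson mu) (poisson (-lam)) n}
      = Set.Ici lam := by
    ext mu
    simp only [Set.mem_setOf_eq, Set.mem_Ici]
    constructor
    · rintro ⟨hmu, h⟩
      have := (key mu (-lam)).1 h
      linarith
    · intro h
      exact ⟨le_trans hlam h, (key mu (-lam)).2 (by linarith)⟩
  have hset4 : {mu : ℝ | 0 ≤ mu ∧ ∀ n : ℤ, 0 ≤ conv (poisson lam) (poisson (-mu)) n}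
      = Set.Icc 0 lam := by
    ext mu
    simp only [Set.mem_setOf_eq, Set.mem_Icc]
    constructor
    · rintro ⟨hmu, h⟩
      have := (key lam (-mu)).1 h
      exact ⟨hmu, by linarith⟩
    · rintro ⟨h0, h1⟩
      exact ⟨h0, (key lam (-mu)).2 (by linarith)⟩
  refine ⟨?_, ?_, hset3, hset4⟩
  · apply le_antisymm
    · exact sInf_le ⟨lam, hlam, (key lam (-lam)).2 (by linarith), rfl⟩
    · refine le_sInf ?_
      rintro x ⟨mu, hmu, hpos, rfl⟩
      have := (key mu (-lam)).1 hpos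
      exact ENNReal.ofReal_le_ofReal (by linarith)
  · apply le_antisymm
    · refine sSup_le ?_
      rintro x ⟨mu, hmu, hpos, rfl⟩
      have := (key lam (-mu)).1 hpos
      exact ENNReal.ofReal_le_ofReal (by linarith)
    · exact le_sSup ⟨lam, hlam, (key lam (-lam)).2 (by linarith), rfl⟩
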